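/- The Pastro polynomials and their biorthogonal partners satisfy the first Baxter recurrence: for every nonnegative integer n and all real x ≠ 0, P_{n+1}(x;a,b;q) = x P_n(x;a,b;q) - α_n x^n R_n(x;a,b;q), where α_n = -(a^{-1} b q)^{n+1} (a b^{-1};q)_{n+1} / (b;q)_{n+1}. -/

import Mathlib

/-- The q-Pochhammer symbol `(z;q)_k = ∏_{j=0}^{k-1} (1 - z q^j)`. -/
noncomputable def qPoch (q z : ℝ) (k : ℕ) : ℝ :=
  ∏ j ∈ Finset.range k, (1 - z * q ^ j)

/-- Coefficient `c_{n,k}` of the monic Pastro polynomial. -/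
noncomputable def pastroCoeff (q a b : ℝ) (n k : ℕ) : ℝ :=
  (qPoch q (a⁻¹ * b * q ^ (1 - (n : ℤ))) n * qPoch q q n /
      (qPoch q (q ^ (-(n : ℤ))) n * qPoch q b n)) *
    (qPoch q (q ^ (-(n : ℤ))) k * qPoch q b k /
      (qPoch q (a⁻¹ * b * q ^ (1 - (n : ℤ))) k * qPoch q q k))

/-- The monic Pastro polynomial `P_n(x;a,b;q)`. -/
noncomputable def pastroP (q a b : ℝ) (n : ℕ) (x : ℝ) : ℝ :=
  ∑ k ∈ Finset.range (n + 1), pastroCoeff q a b n k * x ^ k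

/-- The biorthogonal partner `R_n(x;a,b;q)` of the Pastro polynomials. -/
noncomputable def pastroR (q a b : ℝ) (n : ℕ) (x : ℝ) : ℝ :=
  (qPoch q (q ^ (-(n : ℤ))) n * qPoch q (b * q⁻¹) n /
      (qPoch q (a⁻¹ * b * q ^ (-(n : ℤ))) n * qPoch q q n)) *
    ∑ k ∈ Finset.range (n + 1),
      (qPoch q (q ^ (-(n : ℤ))) k * qPoch q (a * b⁻¹ * q) k /
          (qPoch q (b⁻¹ * q ^ (2 - (n : ℤ))) k * qPoch q q k)) *
        (q ^ 2 / (a * x)) ^ k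

lemma qPoch_zero (q z : ℝ) : qPoch q z 0 = 1 := Finset.prod_range_zero _

lemma qPoch_one (q z : ℝ) : qPoch q z 1 = 1 - z := by
  simp [qPoch]

lemma qPoch_succ (q z : ℝ) (k : ℕ) :
    qPoch q z (k + 1) = qPoch q z k * (1 - z * q ^ k) := Finset.prod_range_succ _ _

lemma qPoch_succ' (q z : ℝ) (k : ℕ) :
    qPoch q z (k + 1) = (1 - z) * qPoch q (z * q) k := by
  rw [qPoch, Finset.prod_range_succ']
  simp only [pow_zero, mul_one]
  rw [mul_comm, qPoch]
  congr 1
  refine Finset.prod_congr rfl fun j _ => ?_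
  ring

lemma qPoch_first (q z w : ℝ) (h : z * q = w) (k : ℕ) :
    qPoch q z (k + 1) = (1 - z) * qPoch q w k := by
  rw [qPoch_succ', h]

lemma sub_one_ne' {x : ℝ} (h : x ≠ 1) : (1:ℝ) - x ≠ 0 := by
  intro hc; exact h (by linarith [sub_eq_zero.mp hc])

lemma qPoch_ne (q z : ℝ) (k : ℕ) (h : ∀ j, j < k → z * q ^ j ≠ 1) : qPoch q z k ≠ 0 := by
  rw [qPoch]
  refine Finset.prod_ne_zero_iff.mpr fun j hj => ?_
  have hj' := h j (Finset.mem_range.mp hj)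
  intro hc
  exact hj' (by linarith [sub_eq_zero.mp hc])

set_option linter.unusedSectionVars false

section NZ

variable {q a b : ℝ} (hq : q ≠ 0) (hq1 : ∀ k : ℤ, k ≠ 0 → q ^ k ≠ 1)
  (ha : a ≠ 0) (hb : b ≠ 0)
  (hbq : ∀ m : ℤ, b * q ^ m ≠ 1) (habq : ∀ m : ℤ, a⁻¹ * b * q ^ m ≠ 1)

include hq hq1 ha hb hbq habq

lemma zph (m : ℤ) (j : ℕ) : (q:ℝ) ^ (m + j) = q ^ m * q ^ j := by
  rw [zpow_add₀ hq, zpow_natCast]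

lemma hqpow1 (k : ℕ) (hk : 0 < k) : (1:ℝ) - q ^ k ≠ 1 - 1 := by
  simp only [sub_self]
  intro hc
  exact hq1 k (by exact_mod_cast hk.ne') (by rw [zpow_natCast]; linarith)

lemma hqp (k : ℕ) (hk : 0 < k) : (1:ℝ) - q ^ k ≠ 0 := by
  have := hqpow1 hq hq1 ha hb hbq habq k hk; simpa using this

lemma hab' (m : ℤ) : a * b⁻¹ * q ^ m ≠ 1 := by
  intro h
  apply habq (-m)
  have h2 : (a * b⁻¹ * q ^ m) * (a⁻¹ * b * q ^ (-m)) = a⁻¹ * b * q ^ (-m) := by rw [h]; ring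
  rw [← h2]
  field_simp [zpow_ne_zero]
  rw [← zpow_add₀ hq, add_neg_cancel, zpow_zero]

lemma hbinv (m : ℤ) : b⁻¹ * q ^ m ≠ 1 := by
  intro h
  apply hbq (-m)
  have h2 : (b⁻¹ * q ^ m) * (b * q ^ (-m)) = b * q ^ (-m) := by rw [h]; ring
  rw [← h2]
  field_simp [zpow_ne_zero]
  rw [← zpow_add₀ hq, add_neg_cancel, zpow_zero]

lemma nzQ (k : ℕ) : qPoch q q k ≠ 0 := by
  refine qPoch_ne q q k fun j _ => ?_
  intro hc
  exact hq1 (1 + j) (by positivity) (by rw [zph hq hq1 ha hb hbq habq, zpow_one, ← hc])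

lemma nzB (k : ℕ) : qPoch q b k ≠ 0 := by
  refine qPoch_ne q b k fun j _ => ?_
  have := hbq j
  rwa [zpow_natCast] at this

lemma nzBq (k : ℕ) : qPoch q (b * q⁻¹) k ≠ 0 := by
  refine qPoch_ne q (b * q⁻¹) k fun j _ => ?_
  have := hbq (-1 + j)
  rw [zph hq hq1 ha hb hbq habq, zpow_neg_one] at this
  intro hc; apply this; rw [← hc]; ring

lemma nzAb1 (n k : ℕ) : qPoch q (a⁻¹ * b * (q * (q ^ n)⁻¹)) k ≠ 0 := by
  refine qPoch_ne _ _ k fun j _ => ?_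
  have := habq (1 - n + j)
  rw [zph hq hq1 ha hb hbq habq, show (1 - (n:ℤ)) = 1 + -(n:ℤ) by ring, zpow_add₀ hq, zpow_one, zpow_neg,
    zpow_natCast] at this
  intro hc; apply this; rw [← hc]; ring

lemma nzAb0 (n k : ℕ) : qPoch q (a⁻¹ * b * (q ^ n)⁻¹) k ≠ 0 := by
  refine qPoch_ne _ _ k fun j _ => ?_
  have := habq (-n + j)
  rw [zph hq hq1 ha hb hbq habq, zpow_neg, zpow_natCast] at this
  intro hc; apply this; rw [← hc]; ring

lemma nzABq (k : ℕ) : qPoch q (a * b⁻¹ * q) k ≠ 0 := by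
  refine qPoch_ne _ _ k fun j _ => ?_
  have := hab' hq hq1 ha hb hbq habq (1 + j)
  rw [zph hq hq1 ha hb hbq habq, zpow_one] at this
  intro hc; apply this; rw [← hc]; ring

lemma nzAB (k : ℕ) : qPoch q (a * b⁻¹) k ≠ 0 := by
  refine qPoch_ne _ _ k fun j _ => ?_
  have := hab' hq hq1 ha hb hbq habq j
  rwa [zpow_natCast] at this

lemma nzB2 (n k : ℕ) : qPoch q (b⁻¹ * (q ^ 2 * (q ^ n)⁻¹)) k ≠ 0 := by
  refine qPoch_ne _ _ k fun j _ => ?_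
  have := hbinv hq hq1 ha hb hbq habq (2 - n + j)
  rw [zph hq hq1 ha hb hbq habq, show ((2:ℤ) - (n:ℤ)) = 2 + -(n:ℤ) by ring, zpow_add₀ hq, zpow_neg,
    zpow_natCast, show ((2:ℤ):ℤ) = ((2:ℕ):ℤ) by norm_num, zpow_natCast] at this
  intro hc; apply this; rw [← hc]; ring

lemma nzI (n k : ℕ) (hk : k ≤ n) : qPoch q ((q ^ n)⁻¹) k ≠ 0 := by
  refine qPoch_ne _ _ k fun j hj => ?_
  have hne : (j:ℤ) - n ≠ 0 := by
    have : j < n := lt_of_lt_of_le hj hk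
    omega
  have := hq1 _ hne
  rw [sub_eq_add_neg, add_comm, zph hq hq1 ha hb hbq habq, zpow_neg, zpow_natCast] at this
  exact this


end NZ

/-- normalized form of `pastroCoeff` -/
noncomputable def pc (q a b : ℝ) (n k : ℕ) : ℝ :=
  (qPoch q (a⁻¹ * b * (q * (q ^ n)⁻¹)) n * qPoch q q n /
      (qPoch q ((q ^ n)⁻¹) n * qPoch q b n)) *
    (qPoch q ((q ^ n)⁻¹) k * qPoch q b k /
      (qPoch q (a⁻¹ * b * (q * (q ^ n)⁻¹)) k * qPoch q q k))

noncomputable def sT (q a b : ℝ) (n m : ℕ) : ℝ :=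
  qPoch q ((q ^ n)⁻¹) m * qPoch q (a * b⁻¹ * q) m /
    (qPoch q (b⁻¹ * (q ^ 2 * (q ^ n)⁻¹)) m * qPoch q q m)

noncomputable def eT (q a b : ℝ) (n k : ℕ) : ℝ :=
  (-(a⁻¹ * b * q) ^ (n + 1) * qPoch q (a * b⁻¹) (n + 1) / qPoch q b (n + 1)) *
    (qPoch q ((q ^ n)⁻¹) n * qPoch q (b * q⁻¹) n /
      (qPoch q (a⁻¹ * b * (q ^ n)⁻¹) n * qPoch q q n)) *
    sT q a b n (n - k) * (q ^ 2 / a) ^ (n - k)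

lemma zp0 (q : ℝ) (n : ℕ) : (q:ℝ) ^ (-(n : ℤ)) = (q ^ n)⁻¹ := by
  rw [zpow_neg, zpow_natCast]

lemma zp1 (q : ℝ) (hq : q ≠ 0) (n : ℕ) : (q:ℝ) ^ (1 - (n : ℤ)) = q * (q ^ n)⁻¹ := by
  rw [sub_eq_add_neg, zpow_add₀ hq, zpow_one, zpow_neg, zpow_natCast]

lemma zp2 (q : ℝ) (hq : q ≠ 0) (n : ℕ) : (q:ℝ) ^ (2 - (n : ℤ)) = q ^ 2 * (q ^ n)⁻¹ := by
  rw [sub_eq_add_neg, zpow_add₀ hq, zpow_neg, zpow_natCast,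
    show ((2:ℤ)) = ((2:ℕ):ℤ) by norm_num, zpow_natCast]

lemma pc_eq (q a b : ℝ) (hq : q ≠ 0) (n k : ℕ) : pastroCoeff q a b n k = pc q a b n k := by
  rw [pastroCoeff, pc, zp0, zp1 q hq]

section Main

variable {q a b : ℝ} (hq : q ≠ 0) (hq1 : ∀ k : ℤ, k ≠ 0 → q ^ k ≠ 1)
  (ha : a ≠ 0) (hb : b ≠ 0)
  (hbq : ∀ m : ℤ, b * q ^ m ≠ 1) (habq : ∀ m : ℤ, a⁻¹ * b * q ^ m ≠ 1)

include hq hq1 ha hb hbq habq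

lemma ratio1' (n k : ℕ) (hk : k ≤ n) :
    pc q a b (n + 1) (k + 1) * ((1 - b * q ^ n) * (1 - q ^ (k + 1))) =
      pc q a b n k * ((1 - q ^ (n + 1)) * (1 - b * q ^ k)) := by
  have e1 : a⁻¹ * b * (q * (q ^ (n + 1))⁻¹) * q = a⁻¹ * b * (q * (q ^ n)⁻¹) := by
    rw [pow_succ]; field_simp
  have e2 : ((q:ℝ) ^ (n + 1))⁻¹ * q = (q ^ n)⁻¹ := by
    rw [pow_succ]; field_simp
  rw [pc, pc,
    qPoch_first q (a⁻¹ * b * (q * (q ^ (n + 1))⁻¹)) _ e1 n,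
    qPoch_first q ((q ^ (n + 1))⁻¹) _ e2 n,
    qPoch_first q ((q ^ (n + 1))⁻¹) _ e2 k,
    qPoch_first q (a⁻¹ * b * (q * (q ^ (n + 1))⁻¹)) _ e1 k,
    qPoch_succ q q n, qPoch_succ q b n, qPoch_succ q b k, qPoch_succ q q k]
  have nQn := nzQ hq hq1 ha hb hbq habq n
  have nQk := nzQ hq hq1 ha hb hbq habq k
  have nBn := nzB hq hq1 ha hb hbq habq n
  have nBk := nzB hq hq1 ha hb hbq habq k
  have nIn := nzI hq hq1 ha hb hbq habq n n le_rfl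
  have nIk := nzI hq hq1 ha hb hbq habq n k hk
  have nAn := nzAb1 hq hq1 ha hb hbq habq n n
  have nAk := nzAb1 hq hq1 ha hb hbq habq n k
  have f1 : (1:ℝ) - a⁻¹ * b * (q * (q ^ (n + 1))⁻¹) ≠ 0 := by
    have := habq (1 - (n + 1 : ℕ))
    rw [zp1 q hq] at this
    intro hc; apply this; push_cast; linarith [sub_eq_zero.mp hc]
  have f2 : (1:ℝ) - ((q:ℝ) ^ (n + 1))⁻¹ ≠ 0 := by
    have := hq1 (-(n + 1 : ℕ)) (by omega)
    rw [zp0] at this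
    intro hc; apply this; push_cast at this ⊢; linarith [sub_eq_zero.mp hc]
  have fb : (1:ℝ) - b * q ^ n ≠ 0 := by
    have := hbq n; rw [zpow_natCast] at this
    intro hc; apply this; linarith [sub_eq_zero.mp hc]
  have fq : (1:ℝ) - q * q ^ k ≠ 0 := by
    have := hqp hq hq1 ha hb hbq habq (k+1) (by omega)
    rw [pow_succ] at this
    intro hc; apply this; rw [← hc]; ring
  set A := qPoch q (a⁻¹ * b * (q * (q ^ n)⁻¹)) n with hsA
  set A2 := qPoch q (a⁻¹ * b * (q * (q ^ n)⁻¹)) k with hsA2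
  set Q := qPoch q q n with hsQ
  set Q2 := qPoch q q k with hsQ2
  set I := qPoch q ((q ^ n)⁻¹) n with hsI
  set I2 := qPoch q ((q ^ n)⁻¹) k with hsI2
  set B := qPoch q b n with hsB
  set B2 := qPoch q b k with hsB2
  set z1 := a⁻¹ * b * (q * (q ^ (n + 1))⁻¹) with hz1
  set z2 := ((q:ℝ) ^ (n + 1))⁻¹ with hz2
  rw [show (1:ℝ) - q ^ (n+1) = 1 - q * q ^ n by rw [pow_succ]; ring,
      show (1:ℝ) - q ^ (k+1) = 1 - q * q ^ k by rw [pow_succ]; ring]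
  have fb' : (1:ℝ) - q ^ n * b ≠ 0 := by rwa [mul_comm]
  field_simp

lemma ratio2' (n k : ℕ) (hk : k ≤ n) :
    pc q a b (n + 1) (k + 1) *
        ((1 - a⁻¹ * b * (q * (q ^ (n + 1))⁻¹) * q ^ k) * (1 - q * q ^ k)) =
      pc q a b (n + 1) k * ((1 - ((q:ℝ) ^ (n + 1))⁻¹ * q ^ k) * (1 - b * q ^ k)) := by
  rw [pc, pc,
    qPoch_succ q ((q ^ (n + 1))⁻¹) k, qPoch_succ q b k,
    qPoch_succ q (a⁻¹ * b * (q * (q ^ (n + 1))⁻¹)) k,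
    qPoch_succ q q k]
  have nQr := nzQ hq hq1 ha hb hbq habq (n+1)
  have nQk := nzQ hq hq1 ha hb hbq habq k
  have nBr := nzB hq hq1 ha hb hbq habq (n+1)
  have nBk := nzB hq hq1 ha hb hbq habq k
  have nIr := nzI hq hq1 ha hb hbq habq (n+1) (n+1) le_rfl
  have nIk := nzI hq hq1 ha hb hbq habq (n+1) k (by omega)
  have nAr := nzAb1 hq hq1 ha hb hbq habq (n+1) (n+1)
  have nAk := nzAb1 hq hq1 ha hb hbq habq (n+1) k
  have f1 : (1:ℝ) - a⁻¹ * b * (q * (q ^ (n + 1))⁻¹) * q ^ k ≠ 0 := by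
    have := habq (1 - (n + 1 : ℕ) + k)
    rw [zpow_add₀ hq, zp1 q hq, zpow_natCast] at this
    intro hc; apply this; linear_combination -hc
  have fq : (1:ℝ) - q * q ^ k ≠ 0 := by
    have := hqp hq hq1 ha hb hbq habq (k+1) (by omega)
    rw [pow_succ] at this
    intro hc; apply this; rw [← hc]; ring
  set z1 := a⁻¹ * b * (q * (q ^ (n + 1))⁻¹) with hz1
  set z2 := ((q:ℝ) ^ (n + 1))⁻¹ with hz2
  set Ar := qPoch q (z1) (n+1)
  set A2 := qPoch q (z1) k
  set Qr := qPoch q q (n+1)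
  set Q2 := qPoch q q k
  set Ir := qPoch q (z2) (n+1)
  set I2 := qPoch q (z2) k
  set Br := qPoch q b (n+1)
  set B2 := qPoch q b k
  have f1' : (1:ℝ) - q ^ k * z1 ≠ 0 := by rwa [mul_comm]
  have fq' : (1:ℝ) - q ^ k * q ≠ 0 := by rwa [mul_comm]
  field_simp

lemma sRatio (n m : ℕ) :
    sT q a b n (m + 1) * ((1 - b⁻¹ * (q ^ 2 * (q ^ n)⁻¹) * q ^ m) * (1 - q * q ^ m)) =
      sT q a b n m * ((1 - ((q:ℝ) ^ n)⁻¹ * q ^ m) * (1 - a * b⁻¹ * q * q ^ m)) := by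
  rw [sT, sT,
    qPoch_succ q ((q ^ n)⁻¹) m, qPoch_succ q (a * b⁻¹ * q) m,
    qPoch_succ q (b⁻¹ * (q ^ 2 * (q ^ n)⁻¹)) m,
    qPoch_succ q q m]
  have nQ := nzQ hq hq1 ha hb hbq habq m
  have nB2 := nzB2 hq hq1 ha hb hbq habq n m
  have f1 : (1:ℝ) - b⁻¹ * (q ^ 2 * (q ^ n)⁻¹) * q ^ m ≠ 0 := by
    have := hbinv hq hq1 ha hb hbq habq (2 - (n:ℕ) + m)
    rw [zpow_add₀ hq, zp2 q hq, zpow_natCast] at this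
    intro hc; apply this; linear_combination -hc
  have fq : (1:ℝ) - q * q ^ m ≠ 0 := by
    have := hqp hq hq1 ha hb hbq habq (m+1) (by omega)
    rw [pow_succ] at this
    intro hc; apply this; rw [← hc]; ring
  set zI := ((q:ℝ) ^ n)⁻¹ with hzI
  set zD := b⁻¹ * (q ^ 2 * (q ^ n)⁻¹) with hzD
  set zG := a * b⁻¹ * q with hzG
  set I := qPoch q zI m
  set G := qPoch q zG m
  set D := qPoch q zD m
  set Q := qPoch q q m
  have f1' : (1:ℝ) - q ^ m * zD ≠ 0 := by rwa [mul_comm]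
  have fq' : (1:ℝ) - q ^ m * q ≠ 0 := by rwa [mul_comm]
  field_simp

lemma diag (n : ℕ) : pc q a b n n = 1 := by
  rw [pc]
  have nQ := nzQ hq hq1 ha hb hbq habq n
  have nB := nzB hq hq1 ha hb hbq habq n
  have nI := nzI hq hq1 ha hb hbq habq n n le_rfl
  have nA := nzAb1 hq hq1 ha hb hbq habq n n
  rw [div_mul_div_comm, div_eq_one_iff_eq
    (mul_ne_zero (mul_ne_zero nI nB) (mul_ne_zero nA nQ))]
  ring

lemma fbk (k : ℕ) : (1:ℝ) - b * q ^ k ≠ 0 := by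
  refine sub_one_ne' ?_
  have := hbq k; rwa [zpow_natCast] at this

lemma fIk (k : ℕ) (hk : 0 < k) : (1:ℝ) - ((q:ℝ) ^ k)⁻¹ ≠ 0 := by
  refine sub_one_ne' ?_
  have := hq1 (-(k:ℕ)) (by omega); rwa [zp0] at this

lemma fAk (k : ℕ) : (1:ℝ) - a⁻¹ * b * ((q:ℝ) ^ k)⁻¹ ≠ 0 := by
  refine sub_one_ne' ?_
  have := habq (-(k:ℕ)); rwa [zp0] at this

lemma hbmq : (b:ℝ) - q ≠ 0 := by
  have := hbq (-1)
  intro hc; apply this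
  rw [zpow_neg_one]
  have hb' : b = q := by linarith [sub_eq_zero.mp hc]
  rw [hb', mul_inv_cancel₀ hq]

lemma hqm1 : (q:ℝ) - 1 ≠ 0 := by
  have := hq1 1 (by omega); rw [zpow_one] at this
  intro hc; exact this (by linarith)

lemma Hbase (n : ℕ) :
    eT q a b n n * ((1 - q ^ (n + 1)) * (q - b * q ^ n)) =
      pc q a b (n + 1) n * ((b - q) * (q ^ n - q ^ (n + 1))) := by
  have hbne := hbmq hq hq1 ha hb hbq habq
  have hq1' := hqm1 hq hq1 ha hb hbq habq
  induction n with
  | zero =>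
    have nb0 : (1:ℝ) - b ≠ 0 := by
      have := fbk hq hq1 ha hb hbq habq 0; simpa using this
    simp only [eT, sT, pc, Nat.sub_self, qPoch_zero, qPoch_one, pow_zero, pow_one,
      zero_add, mul_one, one_mul, div_one, Nat.zero_add]
    rw [mul_inv_cancel₀ hq]
    rw [show (1:ℝ) - q⁻¹ = (q - 1) * q⁻¹ by field_simp]
    field_simp
    ring
  | succ n ih =>
    have hqn1 : ((q:ℝ) ^ (n + 1)) ≠ 0 := pow_ne_zero _ hq
    have fq1 : (1:ℝ) - q ^ (n + 1) ≠ 0 := hqp hq hq1 ha hb hbq habq (n + 1) (by omega)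
    have fq2 : (1:ℝ) - q * q ^ n ≠ 0 := by
      intro hc; apply fq1; rw [pow_succ]; linear_combination hc
    have fb2 : (1:ℝ) - b * q ^ (n + 1) ≠ 0 := fbk hq hq1 ha hb hbq habq (n + 1)
    have fb0 : (1:ℝ) - b * q ^ n ≠ 0 := fbk hq hq1 ha hb hbq habq n
    have fA : (1:ℝ) - a⁻¹ * b * (q ^ (n + 1))⁻¹ ≠ 0 := fAk hq hq1 ha hb hbq habq (n + 1)
    have fI : (1:ℝ) - ((q:ℝ) ^ (n + 1))⁻¹ ≠ 0 := fIk hq hq1 ha hb hbq habq (n + 1) (by omega)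
    have hY : ((b - q) * (q ^ n - q ^ (n + 1))) ≠ 0 := by
      refine mul_ne_zero hbne ?_
      have h' : (q:ℝ) ^ n - q ^ (n + 1) = q ^ n * (1 - q) := by rw [pow_succ]; ring
      rw [h']
      exact mul_ne_zero (pow_ne_zero _ hq) (by intro hc; exact hq1' (by linarith))
    have hC : pc q a b (n + 1 + 1) (n + 1) =
        pc q a b (n + 1) n * ((1 - q ^ (n + 1 + 1)) * (1 - b * q ^ n)) /
          ((1 - b * q ^ (n + 1)) * (1 - q ^ (n + 1))) := by
      rw [eq_div_iff (mul_ne_zero fb2 fq1)]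
      linear_combination ratio1' hq hq1 ha hb hbq habq (n + 1) n (by omega)
    have hP : pc q a b (n + 1) n =
        eT q a b n n * ((1 - q ^ (n + 1)) * (q - b * q ^ n)) /
          ((b - q) * (q ^ n - q ^ (n + 1))) := by
      rw [eq_div_iff hY]
      linear_combination (-1 : ℝ) * ih
    have e2 : ((q:ℝ) ^ (n + 1))⁻¹ * q = (q ^ n)⁻¹ := by
      rw [pow_succ]; field_simp
    have e3 : a⁻¹ * b * (q ^ (n + 1))⁻¹ * q = a⁻¹ * b * (q ^ n)⁻¹ := by
      rw [pow_succ]; field_simp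
    rw [hC, hP]
    simp only [eT, sT, Nat.sub_self, qPoch_zero, pow_zero, mul_one, one_mul, div_one]
    rw [qPoch_succ q (a * b⁻¹) (n + 1), qPoch_succ q b (n + 1),
      qPoch_first q ((q ^ (n + 1))⁻¹) _ e2 n,
      qPoch_succ q (b * q⁻¹) n,
      qPoch_first q (a⁻¹ * b * (q ^ (n + 1))⁻¹) _ e3 n,
      qPoch_succ q q n]
    have nAB := nzAB hq hq1 ha hb hbq habq (n + 1)
    have nBb := nzB hq hq1 ha hb hbq habq (n + 1)
    have nI := nzI hq hq1 ha hb hbq habq n n le_rfl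
    have nBq := nzBq hq hq1 ha hb hbq habq n
    have nA0 := nzAb0 hq hq1 ha hb hbq habq n n
    have nQ := nzQ hq hq1 ha hb hbq habq n
    rw [show (1:ℝ) - (q ^ (n + 1))⁻¹ = -(1 - q * q ^ n) * (q ^ (n + 1))⁻¹ by
        rw [pow_succ]; field_simp; ring,
      show (1:ℝ) - a⁻¹ * b * (q ^ (n + 1))⁻¹ = (a * q ^ (n + 1) - b) * (a * q ^ (n + 1))⁻¹ by
        field_simp]
    have fI' : a * q ^ (n + 1) - b ≠ 0 := by
      intro hc
      apply fA
      rw [show a⁻¹ * b * (q ^ (n + 1))⁻¹ = b * (a * q ^ (n + 1))⁻¹ by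
        rw [mul_inv]; ring]
      rw [show b = a * q ^ (n + 1) by linarith, mul_inv_cancel₀ (by positivity)]
      ring
    set AB := qPoch q (a * b⁻¹) (n + 1)
    set Bb := qPoch q b (n + 1)
    set I := qPoch q ((q ^ n)⁻¹) n
    set Bq := qPoch q (b * q⁻¹) n
    set A0 := qPoch q (a⁻¹ * b * (q ^ n)⁻¹) n
    set Q := qPoch q q n
    have hY' : (q:ℝ) ^ n - q ^ (n + 1) ≠ 0 := right_ne_zero_of_mul hY
    field_simp
    simp only [div_pow]
    field_simp
    ring

set_option maxHeartbeats 4000000 in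
lemma Gaux (d k : ℕ) :
    eT q a b (k + d) k * ((1 - q ^ (k + d + 1)) * (q - b * q ^ k)) =
      pc q a b (k + d + 1) k * ((b - q) * (q ^ k - q ^ (k + d + 1))) := by
  induction d generalizing k with
  | zero => simpa using Hbase hq hq1 ha hb hbq habq k
  | succ d ih =>
    have H := ih (k + 1)
    rw [show k + 1 + d = k + d + 1 by omega] at H
    rw [show k + (d + 1) = k + d + 1 by omega]
    simp only [eT] at H ⊢
    rw [show k + d + 1 - k = d + 1 by omega]
    rw [show k + d + 1 - (k + 1) = d by omega] at H
    have hqR : ((q:ℝ) ^ (k + d + 1)) ≠ 0 := pow_ne_zero _ hq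
    have hqR1 : ((q:ℝ) ^ (k + d + 1 + 1)) ≠ 0 := pow_ne_zero _ hq
    have hbne := hbmq hq hq1 ha hb hbq habq
    have fqd : (1:ℝ) - q * q ^ d ≠ 0 := by
      have := hqp hq hq1 ha hb hbq habq (d + 1) (by omega)
      intro hc; apply this; rw [pow_succ]; linear_combination hc
    have fqk : (1:ℝ) - q * q ^ k ≠ 0 := by
      have := hqp hq hq1 ha hb hbq habq (k + 1) (by omega)
      intro hc; apply this; rw [pow_succ]; linear_combination hc
    have fD1 : (1:ℝ) - b⁻¹ * (q ^ 2 * (q ^ (k + d + 1))⁻¹) * q ^ d ≠ 0 := by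
      refine sub_one_ne' ?_
      have := hbinv hq hq1 ha hb hbq habq (2 - (k + d + 1 : ℕ) + d)
      rw [zpow_add₀ hq, zp2 q hq, zpow_natCast] at this
      intro hc; apply this; linear_combination hc
    have fF2a : (1:ℝ) - ((q:ℝ) ^ (k + d + 1 + 1))⁻¹ * q ^ k ≠ 0 := by
      refine sub_one_ne' ?_
      have hne : -((k + d + 1 + 1 : ℕ) : ℤ) + (k : ℕ) ≠ 0 := by push_cast; omega
      have h2 := hq1 _ hne
      rw [zpow_add₀ hq, zp0, zpow_natCast] at h2
      intro hc; apply h2; linear_combination hc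
    have fF2b : (1:ℝ) - b * q ^ k ≠ 0 := fbk hq hq1 ha hb hbq habq k
    have fX1 : ((1:ℝ) - q ^ (k + d + 1 + 1)) * (q - b * q ^ (k + 1)) ≠ 0 := by
      refine mul_ne_zero (hqp hq hq1 ha hb hbq habq _ (by omega)) ?_
      have h' : (q:ℝ) - b * q ^ (k + 1) = q * (1 - b * q ^ k) := by rw [pow_succ]; ring
      rw [h']; exact mul_ne_zero hq fF2b
    have hs := sRatio hq hq1 ha hb hbq habq (k + d + 1) d
    have hr2 := ratio2' hq hq1 ha hb hbq habq (k + d + 1) k (by omega)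
    set A1 := -(a⁻¹ * b * q) ^ (k + d + 1 + 1) * qPoch q (a * b⁻¹) (k + d + 1 + 1) /
      qPoch q b (k + d + 1 + 1) with hA1e
    set B1 := qPoch q ((q ^ (k + d + 1))⁻¹) (k + d + 1) * qPoch q (b * q⁻¹) (k + d + 1) /
      (qPoch q (a⁻¹ * b * (q ^ (k + d + 1))⁻¹) (k + d + 1) * qPoch q q (k + d + 1)) with hB1e
    set C1 := pc q a b (k + d + 1 + 1) (k + 1) with hC1e
    set S0 := sT q a b (k + d + 1) d with hS0e
    have nA1 : A1 ≠ 0 := by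
      rw [hA1e]
      refine div_ne_zero (mul_ne_zero (neg_ne_zero.mpr (pow_ne_zero _
        (mul_ne_zero (mul_ne_zero (inv_ne_zero ha) hb) hq)))
        (nzAB hq hq1 ha hb hbq habq _)) (nzB hq hq1 ha hb hbq habq _)
    have nB1 : B1 ≠ 0 := by
      rw [hB1e]
      exact div_ne_zero (mul_ne_zero (nzI hq hq1 ha hb hbq habq _ _ le_rfl)
        (nzBq hq hq1 ha hb hbq habq _))
        (mul_ne_zero (nzAb0 hq hq1 ha hb hbq habq _ _) (nzQ hq hq1 ha hb hbq habq _))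
    have hM : A1 * B1 * (q ^ 2 / a) ^ d *
        ((1 - q ^ (k + d + 1 + 1)) * (q - b * q ^ (k + 1))) ≠ 0 := by
      exact mul_ne_zero (mul_ne_zero (mul_ne_zero nA1 nB1)
        (pow_ne_zero _ (div_ne_zero (pow_ne_zero _ hq) ha))) fX1
    have hC0 : pc q a b (k + d + 1 + 1) k =
        C1 * ((1 - a⁻¹ * b * (q * (q ^ (k + d + 1 + 1))⁻¹) * q ^ k) * (1 - q * q ^ k)) /
          ((1 - ((q:ℝ) ^ (k + d + 1 + 1))⁻¹ * q ^ k) * (1 - b * q ^ k)) := by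
      rw [eq_div_iff (mul_ne_zero fF2a fF2b)]
      linear_combination (-1 : ℝ) * hr2
    have hE1 : sT q a b (k + d + 1) (d + 1) =
        S0 * ((1 - ((q:ℝ) ^ (k + d + 1))⁻¹ * q ^ d) * (1 - a * b⁻¹ * q * q ^ d)) /
          ((1 - b⁻¹ * (q ^ 2 * (q ^ (k + d + 1))⁻¹) * q ^ d) * (1 - q * q ^ d)) := by
      rw [eq_div_iff (mul_ne_zero fD1 fqd)]
      linear_combination hs
    have hE0 : S0 = C1 * ((b - q) * (q ^ (k + 1) - q ^ (k + d + 1 + 1))) /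
        (A1 * B1 * (q ^ 2 / a) ^ d *
          ((1 - q ^ (k + d + 1 + 1)) * (q - b * q ^ (k + 1)))) := by
      rw [eq_div_iff hM]
      linear_combination H
    have key : ((1 - a⁻¹ * b * (q * (q ^ (k + d + 1 + 1))⁻¹) * q ^ k) * (1 - q * q ^ k)) *
          ((b - q) * (q ^ k - q ^ (k + d + 1 + 1))) *
          (((1 - b⁻¹ * (q ^ 2 * (q ^ (k + d + 1))⁻¹) * q ^ d) * (1 - q * q ^ d)) *
            ((1 - q ^ (k + d + 1 + 1)) * (q - b * q ^ (k + 1)))) =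
        ((1 - ((q:ℝ) ^ (k + d + 1 + 1))⁻¹ * q ^ k) * (1 - b * q ^ k)) *
          ((b - q) * (q ^ (k + 1) - q ^ (k + d + 1 + 1))) *
          (((1 - ((q:ℝ) ^ (k + d + 1))⁻¹ * q ^ d) * (1 - a * b⁻¹ * q * q ^ d)) * (q ^ 2 / a) *
            ((1 - q ^ (k + d + 1 + 1)) * (q - b * q ^ k))) := by
      field_simp
      ring
    clear_value A1 B1 C1 S0
    refine mul_right_cancel₀ (b := (((1 - ((q:ℝ) ^ (k + d + 1 + 1))⁻¹ * q ^ k) * (1 - b * q ^ k)) *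
        ((1 - b⁻¹ * (q ^ 2 * (q ^ (k + d + 1))⁻¹) * q ^ d) * (1 - q * q ^ d)) *
        (A1 * B1 * (q ^ 2 / a) ^ d *
          ((1 - q ^ (k + d + 1 + 1)) * (q - b * q ^ (k + 1)))))) ?_ ?_
    · exact mul_ne_zero (mul_ne_zero (mul_ne_zero fF2a fF2b) (mul_ne_zero fD1 fqd)) hM
    · linear_combination
        (A1 * B1 * (q ^ 2 / a) ^ (d + 1) * ((1 - q ^ (k + d + 1 + 1)) * (q - b * q ^ k)) *
          ((1 - ((q:ℝ) ^ (k + d + 1 + 1))⁻¹ * q ^ k) * (1 - b * q ^ k)) * A1 * B1 *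
          (q ^ 2 / a) ^ d * ((1 - q ^ (k + d + 1 + 1)) * (q - b * q ^ (k + 1)))) * hs
        + (((1 - ((q:ℝ) ^ (k + d + 1))⁻¹ * q ^ d) * (1 - a * b⁻¹ * q * q ^ d)) *
          (q ^ 2 / a) ^ (d + 1) * ((1 - q ^ (k + d + 1 + 1)) * (q - b * q ^ k)) *
          ((1 - ((q:ℝ) ^ (k + d + 1 + 1))⁻¹ * q ^ k) * (1 - b * q ^ k)) * A1 * B1) * H
        + (((b - q) * (q ^ k - q ^ (k + d + 1 + 1))) *
          ((1 - b⁻¹ * (q ^ 2 * (q ^ (k + d + 1))⁻¹) * q ^ d) * (1 - q * q ^ d)) * A1 * B1 *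
          (q ^ 2 / a) ^ d * ((1 - q ^ (k + d + 1 + 1)) * (q - b * q ^ (k + 1)))) * hr2
        - (C1 * A1 * B1 * (q ^ 2 / a) ^ d) * key

lemma Gfull (n k : ℕ) (hk : k ≤ n) :
    eT q a b n k * ((1 - q ^ (n + 1)) * (q - b * q ^ k)) =
      pc q a b (n + 1) k * ((b - q) * (q ^ k - q ^ (n + 1))) := by
  have h := Gaux hq hq1 ha hb hbq habq (n - k) k
  rwa [show k + (n - k) = n by omega] at h

lemma key0 (n : ℕ) : pc q a b (n + 1) 0 + eT q a b n 0 = 0 := by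
  have G0 := Gfull hq hq1 ha hb hbq habq n 0 (Nat.zero_le n)
  have hbne := hbmq hq hq1 ha hb hbq habq
  have fq1 : (1:ℝ) - q ^ (n + 1) ≠ 0 := hqp hq hq1 ha hb hbq habq (n + 1) (by omega)
  have h2 : (pc q a b (n + 1) 0 + eT q a b n 0) * ((b - q) * (1 - q ^ (n + 1))) = 0 := by
    linear_combination (-1 : ℝ) * G0
  rcases mul_eq_zero.mp h2 with h | h
  · exact h
  · exact absurd h (mul_ne_zero hbne fq1)

lemma keyk (n k : ℕ) (hk : k < n) :
    pc q a b (n + 1) (k + 1) + eT q a b n (k + 1) = pc q a b n k := by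
  have Gk := Gfull hq hq1 ha hb hbq habq n (k + 1) (by omega)
  have r1 := ratio1' hq hq1 ha hb hbq habq n k (by omega)
  have fq1 : (1:ℝ) - q ^ (n + 1) ≠ 0 := hqp hq hq1 ha hb hbq habq (n + 1) (by omega)
  have fb : (1:ℝ) - b * q ^ k ≠ 0 := fbk hq hq1 ha hb hbq habq k
  have fx : (q:ℝ) - b * q ^ (k + 1) ≠ 0 := by
    have h' : (q:ℝ) - b * q ^ (k + 1) = q * (1 - b * q ^ k) := by rw [pow_succ]; ring
    rw [h']; exact mul_ne_zero hq fb
  have h2 : (pc q a b (n + 1) (k + 1) + eT q a b n (k + 1) - pc q a b n k) *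
      ((1 - q ^ (n + 1)) * (q - b * q ^ (k + 1))) = 0 := by
    linear_combination Gk + q * r1
  rcases mul_eq_zero.mp h2 with h | h
  · linarith
  · exact absurd h (mul_ne_zero fq1 fx)

end Main

/-- First Baxter recurrence: `P_{n+1}(x) = x P_n(x) - α_n x^n R_n(x)` with
`α_n = -(a⁻¹ b q)^(n+1) (a b⁻¹;q)_{n+1} / (b;q)_{n+1}`. -/
theorem pastro_baxter_first (q a b : ℝ) (hq : q ≠ 0) (hq1 : ∀ k : ℤ, k ≠ 0 → q ^ k ≠ 1)
    (ha : a ≠ 0) (hb : b ≠ 0)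
    (hbq : ∀ m : ℤ, b * q ^ m ≠ 1) (habq : ∀ m : ℤ, a⁻¹ * b * q ^ m ≠ 1)
    (n : ℕ) (x : ℝ) (hx : x ≠ 0) :
    pastroP q a b (n + 1) x =
      x * pastroP q a b n x -
        (-(a⁻¹ * b * q) ^ (n + 1) * qPoch q (a * b⁻¹) (n + 1) / qPoch q b (n + 1)) *
          x ^ n * pastroR q a b n x := by
  have hpc : ∀ m j : ℕ, pastroCoeff q a b m j = pc q a b m j := fun m j => pc_eq q a b hq m j
  have hR : (-(a⁻¹ * b * q) ^ (n + 1) * qPoch q (a * b⁻¹) (n + 1) / qPoch q b (n + 1)) *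
        x ^ n * pastroR q a b n x =
      ∑ k ∈ Finset.range (n + 1), eT q a b n k * x ^ k := by
    rw [pastroR, zp0, zp2 q hq,
      ← Finset.sum_range_reflect (fun k => eT q a b n k * x ^ k) (n + 1),
      Finset.mul_sum, Finset.mul_sum]
    refine Finset.sum_congr rfl fun j hj => ?_
    have hj' : j ≤ n := by have := Finset.mem_range.mp hj; omega
    simp only [eT]
    rw [show n + 1 - 1 - j = n - j by omega, show n - (n - j) = j by omega]
    rw [show ((q:ℝ) ^ 2 / (a * x)) ^ j = (q ^ 2 / a) ^ j / x ^ j by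
        rw [← div_div, div_pow],
      show (x:ℝ) ^ n = x ^ (n - j) * x ^ j by rw [← pow_add]; congr 1; omega]
    have hxj : (x:ℝ) ^ j ≠ 0 := pow_ne_zero _ hx
    set a1 := -(a⁻¹ * b * q) ^ (n + 1) * qPoch q (a * b⁻¹) (n + 1) / qPoch q b (n + 1) with ha1
    set b1 := qPoch q ((q ^ n)⁻¹) n * qPoch q (b * q⁻¹) n /
      (qPoch q (a⁻¹ * b * (q ^ n)⁻¹) n * qPoch q q n) with hb1
    set s1 := qPoch q ((q ^ n)⁻¹) j * qPoch q (a * b⁻¹ * q) j /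
      (qPoch q (b⁻¹ * (q ^ 2 * (q ^ n)⁻¹)) j * qPoch q q j) with hs1
    have hsT : sT q a b n j = s1 := rfl
    rw [hsT]
    clear_value a1 b1 s1
    field_simp
  rw [pastroP, pastroP, hR]
  simp only [hpc]
  rw [Finset.mul_sum, eq_sub_iff_add_eq]
  have h1 : (∑ k ∈ Finset.range (n + 1), pc q a b (n + 1) k * x ^ k) +
      (∑ k ∈ Finset.range (n + 1), eT q a b n k * x ^ k) =
      ∑ k ∈ Finset.range n, x * (pc q a b n k * x ^ k) := by
    rw [← Finset.sum_add_distrib,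
      Finset.sum_range_succ' (fun k => pc q a b (n + 1) k * x ^ k + eT q a b n k * x ^ k) n]
    have h0 : pc q a b (n + 1) 0 * x ^ 0 + eT q a b n 0 * x ^ 0 = 0 := by
      linear_combination key0 hq hq1 ha hb hbq habq n
    rw [h0, add_zero]
    refine Finset.sum_congr rfl fun k hk => ?_
    have hk' : k < n := Finset.mem_range.mp hk
    linear_combination (x ^ (k + 1) : ℝ) * keyk hq hq1 ha hb hbq habq n k hk'
  rw [Finset.sum_range_succ (fun k => pc q a b (n + 1) k * x ^ k) (n + 1),
    Finset.sum_range_succ (fun k => x * (pc q a b n k * x ^ k)) n,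
    diag hq hq1 ha hb hbq habq (n + 1), diag hq hq1 ha hb hbq habq n]
  linear_combination h1
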